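/- Let f(x,y) = x³ + 3xy³ as a real analytic germ at 0 ∈ ℝ². Then ℒ₊(f) = 2/3, ℒ₋(f) := ℒ₊(f(x,-y)) = 7/9, and the Łojasiewicz gradient exponent of f at the origin is ℒ(f) = 7/9. -/

import Mathlib

noncomputable def LGE {𝕜 : Type*} [RCLike 𝕜] {E : Type*} [NormedAddCommGroup E]
    [NormedSpace 𝕜 E] (f : E → 𝕜) : ℝ :=
  sInf {l : ℝ | 0 < l ∧ ∃ c > (0:ℝ), ∃ ε > (0:ℝ), ∀ z : E, ‖z‖ < ε →
    c * ‖f z‖ ^ l ≤ ‖fderiv 𝕜 f z‖}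

/-- `ℓ(φ) = l` for an arc `φ`: `‖∇f(φ(t))‖ ≍ |f(φ(t))|^l` as `t → 0`. -/
def arcExp (f : ℝ × ℝ → ℝ) (φ : ℝ → ℝ × ℝ) (l : ℝ) : Prop :=
  ∃ c₁ c₂ ε : ℝ, 0 < c₁ ∧ 0 < c₂ ∧ 0 < ε ∧ ∀ t : ℝ, 0 < |t| → |t| < ε →
    c₁ * |f (φ t)| ^ l ≤ ‖fderiv ℝ f (φ t)‖ ∧ ‖fderiv ℝ f (φ t)‖ ≤ c₂ * |f (φ t)| ^ l



open ContinuousLinearMap in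
noncomputable def Lmap (a b : ℝ) : ℝ × ℝ →L[ℝ] ℝ :=
  a • fst ℝ ℝ ℝ + b • snd ℝ ℝ ℝ

lemma Lmap_apply (a b : ℝ) (v : ℝ × ℝ) : Lmap a b v = a * v.1 + b * v.2 := by
  simp [Lmap]

lemma norm_Lmap_le (a b : ℝ) : ‖Lmap a b‖ ≤ |a| + |b| := by
  refine ContinuousLinearMap.opNorm_le_bound _ (by positivity) fun v => ?_
  rw [Lmap_apply, Real.norm_eq_abs]
  have h1 : |v.1| ≤ ‖v‖ := by simpa [Real.norm_eq_abs] using norm_fst_le v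
  have h2 : |v.2| ≤ ‖v‖ := by simpa [Real.norm_eq_abs] using norm_snd_le v
  calc |a * v.1 + b * v.2| ≤ |a * v.1| + |b * v.2| := abs_add_le _ _
    _ = |a| * |v.1| + |b| * |v.2| := by rw [abs_mul, abs_mul]
    _ ≤ |a| * ‖v‖ + |b| * ‖v‖ := by gcongr
    _ = (|a| + |b|) * ‖v‖ := by ring

lemma le_norm_Lmap_fst (a b : ℝ) : |a| ≤ ‖Lmap a b‖ := by
  have h := (Lmap a b).le_opNorm ((1 : ℝ), (0 : ℝ))
  simp [Lmap_apply, Prod.norm_def, Real.norm_eq_abs] at h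
  simpa using h

lemma le_norm_Lmap_snd (a b : ℝ) : |b| ≤ ‖Lmap a b‖ := by
  have h := (Lmap a b).le_opNorm ((0 : ℝ), (1 : ℝ))
  simp [Lmap_apply, Prod.norm_def, Real.norm_eq_abs] at h
  simpa using h

lemma hasF (x y : ℝ) :
    HasFDerivAt (fun p : ℝ × ℝ => p.1 ^ 3 + 3 * p.1 * p.2 ^ 3)
      (Lmap (3 * x ^ 2 + 3 * y ^ 3) (9 * x * y ^ 2)) (x, y) := by
  have h1 : HasFDerivAt (fun p : ℝ × ℝ => p.1) (ContinuousLinearMap.fst ℝ ℝ ℝ) (x, y) :=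
    hasFDerivAt_fst
  have h2 : HasFDerivAt (fun p : ℝ × ℝ => p.2) (ContinuousLinearMap.snd ℝ ℝ ℝ) (x, y) :=
    hasFDerivAt_snd
  have hfun : (fun p : ℝ × ℝ => p.1 ^ 3 + 3 * p.1 * p.2 ^ 3)
      = fun p : ℝ × ℝ => p.1 * p.1 * p.1 + 3 * p.1 * (p.2 * p.2 * p.2) := by
    funext p; ring
  rw [hfun]
  have h := ((h1.mul h1).mul h1).add ((h1.const_mul 3).mul ((h2.mul h2).mul h2))
  refine h.congr_fderiv ?_
  ext <;> simp [Lmap] <;> ring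

lemma fderivEqLmap (f : ℝ × ℝ → ℝ)
    (hf : ∀ p : ℝ × ℝ, f p = p.1 ^ 3 + 3 * p.1 * p.2 ^ 3) (x y : ℝ) :
    fderiv ℝ f (x, y) = Lmap (3 * x ^ 2 + 3 * y ^ 3) (9 * x * y ^ 2) := by
  have hfun : f = fun p : ℝ × ℝ => p.1 ^ 3 + 3 * p.1 * p.2 ^ 3 := funext hf
  rw [hfun]
  exact (hasF x y).fderiv

lemma key (x y : ℝ) (hx : |x| ≤ 1) (hy : |y| ≤ 1) :
    |x ^ 3 + 3 * x * y ^ 3| ^ 7 ≤ 100 * max |3 * x ^ 2 + 3 * y ^ 3| |9 * x * y ^ 2| ^ 9 := by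
  set A := |x ^ 2 + y ^ 3| with hA
  set F := |x ^ 3 + 3 * x * y ^ 3| with hFdef
  set M := max |3 * x ^ 2 + 3 * y ^ 3| |9 * x * y ^ 2| with hM
  have hA0 : 0 ≤ A := abs_nonneg _
  have hF0 : 0 ≤ F := abs_nonneg _
  have hx0 : 0 ≤ |x| := abs_nonneg x
  have hy0 : 0 ≤ |y| := abs_nonneg y
  have hsq : x ^ 2 = |x| ^ 2 := (sq_abs x).symm
  have hmaxA : 3 * A ≤ M := by
    have : |3 * x ^ 2 + 3 * y ^ 3| = 3 * A := by
      rw [show 3 * x ^ 2 + 3 * y ^ 3 = 3 * (x ^ 2 + y ^ 3) by ring, abs_mul]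
      norm_num; rfl
    rw [← this]; exact le_max_left _ _
  have hmaxB : 9 * |x| * |y| ^ 2 ≤ M := by
    have : |9 * x * y ^ 2| = 9 * |x| * |y| ^ 2 := by
      rw [abs_mul, abs_mul, abs_pow]; norm_num
    rw [← this]; exact le_max_right _ _
  have hM0 : 0 ≤ M := le_trans (by positivity) hmaxA
  have hFle : F ≤ |x| * (A + 2 * |y| ^ 3) := by
    rw [hFdef, show x ^ 3 + 3 * x * y ^ 3 = x * ((x ^ 2 + y ^ 3) + 2 * y ^ 3) by ring, abs_mul]
    gcongr
    calc |(x ^ 2 + y ^ 3) + 2 * y ^ 3| ≤ |x ^ 2 + y ^ 3| + |2 * y ^ 3| := abs_add_le _ _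
      _ = A + 2 * |y| ^ 3 := by rw [abs_mul, abs_pow]; norm_num; rfl
  rcases le_or_gt (|y| ^ 3) (2 * A) with hc | hc
  · -- case 1 : no cancellation
    have hx2 : x ^ 2 ≤ 3 * A := by
      have h1 : x ^ 2 = |(x ^ 2 + y ^ 3) - y ^ 3| := by
        rw [show (x ^ 2 + y ^ 3) - y ^ 3 = x ^ 2 by ring, abs_of_nonneg (by positivity)]
      have h2 : |(x ^ 2 + y ^ 3) - y ^ 3| ≤ A + |y| ^ 3 := by
        calc |(x ^ 2 + y ^ 3) - y ^ 3| ≤ |x ^ 2 + y ^ 3| + |y ^ 3| := abs_sub _ _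
          _ = A + |y| ^ 3 := by rw [abs_pow]
      linarith
    have hxsq1 : x ^ 2 ≤ 1 := by rw [hsq]; exact pow_le_one₀ hx0 hx
    have hy31 : |y| ^ 3 ≤ 1 := pow_le_one₀ hy0 hy
    have hA2 : A ≤ 2 := by
      calc A ≤ |x ^ 2| + |y ^ 3| := abs_add_le _ _
        _ = x ^ 2 + |y| ^ 3 := by rw [abs_of_nonneg (by positivity), abs_pow]
        _ ≤ 2 := by linarith
    have hF4 : F ≤ 4 := by
      calc F ≤ |x| * (A + 2 * |y| ^ 3) := hFle
        _ ≤ 1 * (2 + 2 * 1) := by gcongr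
        _ = 4 := by norm_num
    have hF5 : F ≤ |x| * (5 * A) := by
      calc F ≤ |x| * (A + 2 * |y| ^ 3) := hFle
        _ ≤ |x| * (A + 2 * (2 * A)) := by gcongr
        _ = |x| * (5 * A) := by ring
    have hF2 : F ^ 2 ≤ 75 * A ^ 3 := by
      have h1 : F ^ 2 ≤ (|x| * (5 * A)) ^ 2 := pow_le_pow_left₀ hF0 hF5 2
      have h2 : (|x| * (5 * A)) ^ 2 = x ^ 2 * (25 * A ^ 2) := by rw [hsq]; ring
      nlinarith [sq_nonneg A, hA0]
    have hF6 : F ^ 6 ≤ 421875 * A ^ 9 := by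
      have h1 : (F ^ 2) ^ 3 ≤ (75 * A ^ 3) ^ 3 := pow_le_pow_left₀ (by positivity) hF2 3
      calc F ^ 6 = (F ^ 2) ^ 3 := by ring
        _ ≤ (75 * A ^ 3) ^ 3 := h1
        _ = 421875 * A ^ 9 := by ring
    have hF7 : F ^ 7 ≤ 1687500 * A ^ 9 := by
      calc F ^ 7 = F * F ^ 6 := by ring
        _ ≤ 4 * (421875 * A ^ 9) := mul_le_mul hF4 hF6 (by positivity) (by norm_num)
        _ = 1687500 * A ^ 9 := by ring
    have hMA : (3 * A) ^ 9 ≤ M ^ 9 := pow_le_pow_left₀ (by positivity) hmaxA 9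
    calc F ^ 7 ≤ 1687500 * A ^ 9 := hF7
      _ ≤ 100 * (3 * A) ^ 9 := by nlinarith [pow_nonneg hA0 9]
      _ ≤ 100 * M ^ 9 := by linarith
  · -- case 2 : cancellation, |y|^3 ≤ 2 x^2
    have hy3A : |y| ^ 3 = |y ^ 3| := (abs_pow y 3).symm
    have hyx : |y| ^ 3 ≤ A + x ^ 2 := by
      calc |y| ^ 3 = |(x ^ 2 + y ^ 3) - x ^ 2| := by
            rw [show (x ^ 2 + y ^ 3) - x ^ 2 = y ^ 3 by ring, ← hy3A.symm, abs_pow]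
        _ ≤ A + |x ^ 2| := abs_sub _ _
        _ = A + x ^ 2 := by rw [abs_of_nonneg (by positivity)]
    have hyx2 : |y| ^ 3 ≤ 2 * x ^ 2 := by linarith
    have hF52 : F ≤ (5 / 2) * (|x| * |y| ^ 3) := by
      calc F ≤ |x| * (A + 2 * |y| ^ 3) := hFle
        _ ≤ |x| * (|y| ^ 3 / 2 + 2 * |y| ^ 3) := by gcongr; linarith
        _ = (5 / 2) * (|x| * |y| ^ 3) := by ring
    have hF7 : F ^ 7 ≤ (5 / 2) ^ 7 * (|x| ^ 7 * |y| ^ 21) := by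
      calc F ^ 7 ≤ ((5 / 2) * (|x| * |y| ^ 3)) ^ 7 := pow_le_pow_left₀ hF0 hF52 7
        _ = (5 / 2) ^ 7 * (|x| ^ 7 * |y| ^ 21) := by ring
    have hkey : |x| ^ 7 * |y| ^ 21 ≤ 2 * (|x| ^ 9 * |y| ^ 18) := by
      have h1 : |x| ^ 7 * |y| ^ 21 = (|x| ^ 7 * |y| ^ 18) * |y| ^ 3 := by ring
      have h2 : (|x| ^ 7 * |y| ^ 18) * |y| ^ 3 ≤ (|x| ^ 7 * |y| ^ 18) * (2 * x ^ 2) :=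
        mul_le_mul_of_nonneg_left hyx2 (by positivity)
      have h3 : (|x| ^ 7 * |y| ^ 18) * (2 * x ^ 2) = 2 * (|x| ^ 9 * |y| ^ 18) := by
        rw [hsq]; ring
      linarith
    have hMB : (9 * |x| * |y| ^ 2) ^ 9 ≤ M ^ 9 := pow_le_pow_left₀ (by positivity) hmaxB 9
    have hexp : (9 * |x| * |y| ^ 2) ^ 9 = 387420489 * (|x| ^ 9 * |y| ^ 18) := by ring
    calc F ^ 7 ≤ (5 / 2) ^ 7 * (|x| ^ 7 * |y| ^ 21) := hF7
      _ ≤ (5 / 2) ^ 7 * (2 * (|x| ^ 9 * |y| ^ 18)) := by gcongr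
      _ ≤ 100 * (387420489 * (|x| ^ 9 * |y| ^ 18)) := by nlinarith [mul_nonneg (pow_nonneg hx0 9) (pow_nonneg hy0 18)]
      _ = 100 * (9 * |x| * |y| ^ 2) ^ 9 := by rw [hexp]
      _ ≤ 100 * M ^ 9 := by linarith

lemma rpow_pow_helper (t : ℝ) (m n : ℕ) (q : ℝ) (h : (m : ℝ) * q = n) :
    (|t| ^ m) ^ q = |t| ^ n := by
  rw [← Real.rpow_natCast |t| m, ← Real.rpow_natCast |t| n,
    ← Real.rpow_mul (abs_nonneg t), h]

lemma normProdLe (a b : ℝ) (c : ℝ) (h1 : |a| ≤ c) (h2 : |b| ≤ c) :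
    ‖((a, b) : ℝ × ℝ)‖ ≤ c := by
  rw [Prod.norm_def]
  exact max_le (by simpa [Real.norm_eq_abs] using h1) (by simpa [Real.norm_eq_abs] using h2)

lemma main_ineq (f : ℝ × ℝ → ℝ)
    (hf : ∀ p : ℝ × ℝ, f p = p.1 ^ 3 + 3 * p.1 * p.2 ^ 3) :
    ∀ z : ℝ × ℝ, ‖z‖ < 1 →
      ((1 : ℝ)/100) ^ ((1 : ℝ)/9) * ‖f z‖ ^ ((7 : ℝ)/9) ≤ ‖fderiv ℝ f z‖ := by
  intro z hz
  obtain ⟨x, y⟩ := z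
  have hx : |x| ≤ 1 := by
    have := (norm_fst_le ((x, y) : ℝ × ℝ)).trans hz.le
    simpa [Real.norm_eq_abs] using this
  have hy : |y| ≤ 1 := by
    have := (norm_snd_le ((x, y) : ℝ × ℝ)).trans hz.le
    simpa [Real.norm_eq_abs] using this
  have hD := fderivEqLmap f hf x y
  set M := max |3 * x ^ 2 + 3 * y ^ 3| |9 * x * y ^ 2| with hM
  have hMN : M ≤ ‖fderiv ℝ f (x, y)‖ := by
    rw [hD]
    exact max_le (le_norm_Lmap_fst _ _) (le_norm_Lmap_snd _ _)
  have hM0 : 0 ≤ M := le_trans (abs_nonneg _) (le_max_left _ _)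
  have hk := key x y hx hy
  have hfz : ‖f (x, y)‖ = |x ^ 3 + 3 * x * y ^ 3| := by rw [hf]; rfl
  refine le_of_pow_le_pow_left₀ (n := 9) (by norm_num) (norm_nonneg _) ?_
  have h1 : ((((1 : ℝ)/100) ^ ((1 : ℝ)/9)) : ℝ) ^ (9:ℕ) = 1/100 := by
    rw [← Real.rpow_natCast (((1 : ℝ)/100) ^ ((1 : ℝ)/9)) 9,
      ← Real.rpow_mul (by norm_num : (0:ℝ) ≤ 1/100)]
    norm_num
  have h2 : (|x ^ 3 + 3 * x * y ^ 3| ^ ((7 : ℝ)/9)) ^ (9:ℕ)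
      = |x ^ 3 + 3 * x * y ^ 3| ^ (7:ℕ) := by
    rw [← Real.rpow_natCast (|x ^ 3 + 3 * x * y ^ 3| ^ ((7 : ℝ)/9)) 9,
      ← Real.rpow_mul (abs_nonneg _), ← Real.rpow_natCast (|x ^ 3 + 3 * x * y ^ 3|) 7]
    norm_num
  have hL : (((1 : ℝ)/100) ^ ((1 : ℝ)/9) * ‖f (x, y)‖ ^ ((7 : ℝ)/9)) ^ 9
      = (1/100) * |x ^ 3 + 3 * x * y ^ 3| ^ 7 := by
    rw [mul_pow, hfz, h1, h2]
  rw [hL]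
  calc (1/100 : ℝ) * |x ^ 3 + 3 * x * y ^ 3| ^ 7 ≤ (1/100) * (100 * M ^ 9) := by
        gcongr
    _ = M ^ 9 := by ring
    _ ≤ ‖fderiv ℝ f (x, y)‖ ^ 9 := pow_le_pow_left₀ hM0 hMN 9

lemma lower_bound (f : ℝ × ℝ → ℝ)
    (hf : ∀ p : ℝ × ℝ, f p = p.1 ^ 3 + 3 * p.1 * p.2 ^ 3) (l : ℝ) (hl : 0 < l)
    (c : ℝ) (hc : 0 < c) (ε : ℝ) (hε : 0 < ε)
    (H : ∀ z : ℝ × ℝ, ‖z‖ < ε → c * ‖f z‖ ^ l ≤ ‖fderiv ℝ f z‖) :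
    (7 : ℝ) / 9 ≤ l := by
  by_contra hcon
  push_neg at hcon
  have hδ : 0 < 7 - 9 * l := by linarith
  set δ := 7 - 9 * l with hδdef
  have h2l : (0 : ℝ) < (2 : ℝ) ^ l := Real.rpow_pos_of_pos two_pos l
  set a := c * (2 : ℝ) ^ l / 9 with hadef
  have ha : 0 < a := by positivity
  have hra : 0 < a ^ ((1 : ℝ)/δ) := Real.rpow_pos_of_pos ha _
  set t := min 1 (min ε (a ^ ((1 : ℝ)/δ))) / 2 with htdef
  have ht0 : 0 < t := by positivity
  have ht1 : t < 1 := by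
    have : t ≤ 1 / 2 := by
      apply div_le_div_of_nonneg_right ?_ ?_ |>.trans_eq rfl
      · exact min_le_left _ _
      · norm_num
    linarith
  have htε : t < ε := by
    have h1 : t ≤ ε / 2 := by
      have : min 1 (min ε (a ^ ((1 : ℝ)/δ))) ≤ ε := (min_le_right _ _).trans (min_le_left _ _)
      rw [htdef]; linarith
    linarith
  have hta : t < a ^ ((1 : ℝ)/δ) := by
    have h1 : min 1 (min ε (a ^ ((1 : ℝ)/δ))) ≤ a ^ ((1 : ℝ)/δ) :=
      (min_le_right _ _).trans (min_le_right _ _)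
    rw [htdef]; linarith
  -- evaluate at z = (t^3, -t^2)
  have hz : ‖((t ^ 3, -t ^ 2) : ℝ × ℝ)‖ < ε := by
    refine lt_of_le_of_lt (normProdLe _ _ t ?_ ?_) htε
    · rw [abs_of_nonneg (by positivity)]
      nlinarith [mul_nonneg (mul_nonneg ht0.le (sub_nonneg.mpr ht1.le)) (by linarith : (0:ℝ) ≤ 1 + t)]
    · rw [abs_neg, abs_of_nonneg (by positivity)]
      nlinarith [mul_nonneg ht0.le (sub_nonneg.mpr ht1.le)]
  have hH := H _ hz
  have hfval : f ((t ^ 3, -t ^ 2) : ℝ × ℝ) = -2 * t ^ 9 := by rw [hf]; ring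
  have hfabs : ‖f ((t ^ 3, -t ^ 2) : ℝ × ℝ)‖ = 2 * t ^ 9 := by
    rw [hfval, Real.norm_eq_abs, abs_mul, abs_of_nonneg (by positivity : (0:ℝ) ≤ t ^ 9)]
    norm_num
  have hDval : fderiv ℝ f ((t ^ 3, -t ^ 2) : ℝ × ℝ) = Lmap 0 (9 * t ^ 7) := by
    have := fderivEqLmap f hf (t ^ 3) (-t ^ 2)
    rw [this]
    congr 1 <;> ring
  have hDnorm : ‖fderiv ℝ f ((t ^ 3, -t ^ 2) : ℝ × ℝ)‖ ≤ 9 * t ^ 7 := by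
    rw [hDval]
    refine (norm_Lmap_le _ _).trans ?_
    rw [abs_of_nonneg (by positivity : (0:ℝ) ≤ 9 * t ^ 7)]
    simp
  have hmain : c * (2 * t ^ 9) ^ l ≤ 9 * t ^ 7 := by
    rw [← hfabs]; exact hH.trans hDnorm
  -- rewrite powers as rpow
  have hexp : (2 * t ^ 9 : ℝ) ^ l = (2:ℝ) ^ l * t ^ (9 * l) := by
    rw [Real.mul_rpow (by norm_num) (by positivity), ← Real.rpow_natCast t 9,
      ← Real.rpow_mul ht0.le]
    norm_num
  have ht7 : (t : ℝ) ^ (7 : ℕ) = t ^ (9 * l) * t ^ δ := by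
    rw [← Real.rpow_natCast t 7, ← Real.rpow_add ht0]
    norm_num [hδdef]
  have hcancel : c * (2:ℝ) ^ l ≤ 9 * t ^ δ := by
    have hp : 0 < t ^ (9 * l) := Real.rpow_pos_of_pos ht0 _
    have : c * ((2:ℝ) ^ l * t ^ (9 * l)) ≤ 9 * (t ^ (9 * l) * t ^ δ) := by
      rw [← hexp, ← ht7]; exact hmain
    have h2 : (c * (2:ℝ) ^ l) * t ^ (9 * l) ≤ (9 * t ^ δ) * t ^ (9 * l) := by
      nlinarith
    exact le_of_mul_le_mul_right h2 hp
  have htlt : t ^ δ < a := by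
    have h1 : t ^ δ < (a ^ ((1:ℝ)/δ)) ^ δ := Real.rpow_lt_rpow ht0.le hta hδ
    have h2 : (a ^ ((1:ℝ)/δ)) ^ δ = a := by
      rw [← Real.rpow_mul ha.le, one_div, inv_mul_cancel₀ (ne_of_gt hδ), Real.rpow_one]
    linarith
  have : 9 * t ^ δ < c * (2:ℝ) ^ l := by
    rw [hadef] at htlt
    nlinarith
  linarith

lemma arc_one (f : ℝ × ℝ → ℝ)
    (hf : ∀ p : ℝ × ℝ, f p = p.1 ^ 3 + 3 * p.1 * p.2 ^ 3) (g : ℝ) (hg : g ≠ 0) :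
    arcExp f (fun t => (g * t ^ 3, t ^ 2)) (2 / 3) := by
  have hg3 : g ^ 3 + 3 * g ≠ 0 := by
    rw [show g ^ 3 + 3 * g = g * (g ^ 2 + 3) by ring]
    exact mul_ne_zero hg (by positivity)
  set K := |g ^ 3 + 3 * g| ^ ((2 : ℝ)/3) with hK
  have hKpos : 0 < K := Real.rpow_pos_of_pos (abs_pos.mpr hg3) _
  refine ⟨3 / K, (3 * (g ^ 2 + 1) + 9 * |g|) / K, 1, by positivity, by positivity, one_pos,
    fun t ht0 ht1 => ?_⟩
  have ht6 : |t| ^ 6 = t ^ 6 := by rw [← abs_pow, abs_of_nonneg (by positivity)]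
  have hfval : f (g * t ^ 3, t ^ 2) = (g ^ 3 + 3 * g) * t ^ 9 := by rw [hf]; ring
  have habs : |f (g * t ^ 3, t ^ 2)| = |g ^ 3 + 3 * g| * |t| ^ 9 := by
    rw [hfval, abs_mul, abs_pow]
  have hrp : |f (g * t ^ 3, t ^ 2)| ^ ((2 : ℝ)/3) = K * |t| ^ 6 := by
    rw [habs, Real.mul_rpow (abs_nonneg _) (by positivity),
      rpow_pow_helper t 9 6 (2/3) (by norm_num)]
  have hD : fderiv ℝ f (g * t ^ 3, t ^ 2) = Lmap (3 * (g ^ 2 + 1) * t ^ 6) (9 * g * t ^ 7) := by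
    rw [fderivEqLmap f hf]
    congr 1 <;> ring
  have habs1 : |3 * (g ^ 2 + 1) * t ^ 6| = 3 * (g ^ 2 + 1) * |t| ^ 6 := by
    rw [ht6, abs_of_nonneg (by positivity)]
  have habs2 : |9 * g * t ^ 7| = 9 * |g| * |t| ^ 7 := by
    rw [abs_mul, abs_mul, abs_pow]
    norm_num
  have hc1eq : 3 / K * (K * |t| ^ 6) = 3 * |t| ^ 6 := by field_simp
  have hc2eq : (3 * (g ^ 2 + 1) + 9 * |g|) / K * (K * |t| ^ 6)
      = (3 * (g ^ 2 + 1) + 9 * |g|) * |t| ^ 6 := by field_simp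
  constructor
  · rw [show ((2 : ℝ) / 3) = ((2 : ℝ)/3) by norm_num, hrp, hc1eq]
    have h1 : 3 * |t| ^ 6 ≤ |3 * (g ^ 2 + 1) * t ^ 6| := by
      rw [habs1]
      nlinarith [pow_nonneg (abs_nonneg t) 6, sq_nonneg g]
    exact h1.trans (by rw [hD]; exact le_norm_Lmap_fst _ _)
  · rw [show ((2 : ℝ) / 3) = ((2 : ℝ)/3) by norm_num, hrp, hc2eq]
    have h7 : |t| ^ 7 ≤ |t| ^ 6 := pow_le_pow_of_le_one (abs_nonneg t) ht1.le (by norm_num)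
    calc ‖fderiv ℝ f (g * t ^ 3, t ^ 2)‖
        ≤ |3 * (g ^ 2 + 1) * t ^ 6| + |9 * g * t ^ 7| := by rw [hD]; exact norm_Lmap_le _ _
      _ = 3 * (g ^ 2 + 1) * |t| ^ 6 + 9 * |g| * |t| ^ 7 := by rw [habs1, habs2]
      _ ≤ 3 * (g ^ 2 + 1) * |t| ^ 6 + 9 * |g| * |t| ^ 6 := by gcongr
      _ = (3 * (g ^ 2 + 1) + 9 * |g|) * |t| ^ 6 := by ring

lemma arc_two (f : ℝ × ℝ → ℝ)
    (hf : ∀ p : ℝ × ℝ, f p = p.1 ^ 3 + 3 * p.1 * p.2 ^ 3) :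
    arcExp f (fun t => (t ^ 3, -t ^ 2)) (7 / 9) := by
  refine ⟨1, 9, 1, one_pos, by norm_num, one_pos, fun t ht0 ht1 => ?_⟩
  have hfval : f (t ^ 3, -t ^ 2) = -2 * t ^ 9 := by rw [hf]; ring
  have habs : |f (t ^ 3, -t ^ 2)| = 2 * |t| ^ 9 := by
    rw [hfval, abs_mul, abs_pow]
    norm_num
  have hrp : |f (t ^ 3, -t ^ 2)| ^ ((7 : ℝ)/9) = (2 : ℝ) ^ ((7 : ℝ)/9) * |t| ^ 7 := by
    rw [habs, Real.mul_rpow (by norm_num) (by positivity),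
      rpow_pow_helper t 9 7 (7/9) (by norm_num)]
  have hD : fderiv ℝ f (t ^ 3, -t ^ 2) = Lmap 0 (9 * t ^ 7) := by
    rw [fderivEqLmap f hf]
    congr 1 <;> ring
  have habs2 : |9 * t ^ 7| = 9 * |t| ^ 7 := by rw [abs_mul, abs_pow]; norm_num
  have h2le : (2 : ℝ) ^ ((7 : ℝ)/9) ≤ 2 := by
    have := Real.rpow_le_rpow_of_exponent_le one_le_two (by norm_num : (7:ℝ)/9 ≤ 1)
    rwa [Real.rpow_one] at this
  have h2ge : (1 : ℝ) ≤ (2 : ℝ) ^ ((7 : ℝ)/9) := by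
    have := Real.rpow_le_rpow_of_exponent_le one_le_two (by norm_num : (0:ℝ) ≤ 7/9)
    rwa [Real.rpow_zero] at this
  have ht7 : (0:ℝ) ≤ |t| ^ 7 := by positivity
  constructor
  · rw [show ((7 : ℝ) / 9) = ((7 : ℝ)/9) by norm_num, hrp, one_mul]
    have h1 : (2 : ℝ) ^ ((7 : ℝ)/9) * |t| ^ 7 ≤ 9 * |t| ^ 7 := by nlinarith
    refine h1.trans ?_
    rw [hD, ← habs2]
    exact le_norm_Lmap_snd _ _
  · rw [show ((7 : ℝ) / 9) = ((7 : ℝ)/9) by norm_num, hrp]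
    calc ‖fderiv ℝ f (t ^ 3, -t ^ 2)‖ ≤ |(0:ℝ)| + |9 * t ^ 7| := by
          rw [hD]; exact norm_Lmap_le _ _
      _ = 9 * |t| ^ 7 := by rw [habs2]; simp
      _ ≤ 9 * ((2 : ℝ) ^ ((7 : ℝ)/9) * |t| ^ 7) := by nlinarith

/-- for `f(x,y) = x³ + 3xy³` (mini-regular in `x` of order `3`), the real polar
branch for `y > 0` is `x = g·y^{3/2}` (`g` generic, parametrized `t ↦ (g t³, t²)`) with
exponent `2/3`, so `ℒ₊(f) = max{2/3, 2/3} = 2/3`; for `y < 0` (i.e. for `f(x,-y)`) the real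
polar branch `x = y^{3/2}` (arc `t ↦ (t³, -t²)`) has exponent `7/9`, so `ℒ₋(f) = 7/9`; and
`ℒ(f) = max{ℒ₊(f), ℒ₋(f)} = 7/9`. -/
theorem stmt15 (f : ℝ × ℝ → ℝ)
    (hf : ∀ p : ℝ × ℝ, f p = p.1 ^ 3 + 3 * p.1 * p.2 ^ 3) :
    (∀ g : ℝ, g ≠ 0 → arcExp f (fun t => (g * t ^ 3, t ^ 2)) (2 / 3)) ∧
    arcExp f (fun t => (t ^ 3, -t ^ 2)) (7 / 9) ∧
    max ((2 : ℝ) / 3) (7 / 9) = 7 / 9 ∧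
    LGE f = 7 / 9 := by
  refine ⟨fun g hg => arc_one f hf g hg, arc_two f hf, by norm_num, ?_⟩
  have hmem : (7/9 : ℝ) ∈ {l : ℝ | 0 < l ∧ ∃ c > (0:ℝ), ∃ ε > (0:ℝ), ∀ z : ℝ × ℝ, ‖z‖ < ε →
      c * ‖f z‖ ^ l ≤ ‖fderiv ℝ f z‖} :=
    ⟨by norm_num, ((1:ℝ)/100) ^ ((1:ℝ)/9), Real.rpow_pos_of_pos (by norm_num) _, 1, one_pos,
      main_ineq f hf⟩
  have hlb : ∀ l ∈ {l : ℝ | 0 < l ∧ ∃ c > (0:ℝ), ∃ ε > (0:ℝ), ∀ z : ℝ × ℝ, ‖z‖ < ε →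
      c * ‖f z‖ ^ l ≤ ‖fderiv ℝ f z‖}, (7:ℝ)/9 ≤ l := by
    rintro l ⟨hl0, c, hc, ε, hε, H⟩
    exact lower_bound f hf l hl0 c hc ε hε H
  unfold LGE
  exact le_antisymm (csInf_le ⟨7/9, fun l hl => hlb l hl⟩ hmem) (le_csInf ⟨_, hmem⟩ hlb)
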